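/- Let X ∈ 𝓜. Then the two sets {Z ∈ 𝓕 : Xᵀφ(Z) + Zᵀφ(X) = 0} and {Z ∈ 𝓕 : ⟨Z, φ(X)(Tᵀ + ψ(T))⟩ = 0 for all T ∈ 𝒢} are equal (these are the two characterizations of the tangent space T_X𝓜). -/

import Mathlib

open Matrix

attribute [local instance] Matrix.frobeniusNormedAddCommGroup Matrix.frobeniusNormedSpace

/-- Frobenius inner product `⟨A, B⟩ = tr(AᵀB)`. -/
noncomputable def frobInner {n p : ℕ} (A B : Matrix (Fin n) (Fin p) ℝ) : ℝ :=
  (Aᵀ * B).trace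

/-- The constraint map `C(X) = Xᵀ φ(X) − I_p`. -/
noncomputable def Cmap {n p : ℕ}
    (φ : Matrix (Fin n) (Fin p) ℝ →ₗ[ℝ] Matrix (Fin n) (Fin p) ℝ)
    (X : Matrix (Fin n) (Fin p) ℝ) : Matrix (Fin p) (Fin p) ℝ :=
  Xᵀ * φ X - 1

/-- The constraint dissolving operator `𝒜(X) = (3/2)X − (1/2)X φ(X)ᵀ X`. -/
noncomputable def Amap {n p : ℕ}
    (φ : Matrix (Fin n) (Fin p) ℝ →ₗ[ℝ] Matrix (Fin n) (Fin p) ℝ)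
    (X : Matrix (Fin n) (Fin p) ℝ) : Matrix (Fin n) (Fin p) ℝ :=
  (3/2 : ℝ) • X - (1/2 : ℝ) • (X * (φ X)ᵀ * X)

/-- `𝒢 = span{X₁ᵀ X₂ : X₁, X₂ ∈ 𝓕}`. -/
noncomputable def Gspan {n p : ℕ} (𝓕 : Submodule ℝ (Matrix (Fin n) (Fin p) ℝ)) :
    Submodule ℝ (Matrix (Fin p) (Fin p) ℝ) :=
  Submodule.span ℝ {T | ∃ X₁ ∈ 𝓕, ∃ X₂ ∈ 𝓕, T = X₁ᵀ * X₂}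

theorem stmt_11 {n p : ℕ} (hn : 0 < n) (hp : 0 < p)
    (φ : Matrix (Fin n) (Fin p) ℝ →ₗ[ℝ] Matrix (Fin n) (Fin p) ℝ)
    (𝓕 : Submodule ℝ (Matrix (Fin n) (Fin p) ℝ))
    (ψ : Matrix (Fin p) (Fin p) ℝ →ₗ[ℝ] Matrix (Fin p) (Fin p) ℝ)
    (hφ𝓕 : ∀ X ∈ 𝓕, φ X ∈ 𝓕)
    (hXT : ∀ X ∈ 𝓕, ∀ T ∈ Gspan 𝓕, X * T ∈ 𝓕)
    (hφsa : ∀ A B : Matrix (Fin n) (Fin p) ℝ, frobInner (φ A) B = frobInner A (φ B))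
    (hψG : ∀ T ∈ Gspan 𝓕, ψ T ∈ Gspan 𝓕)
    (hφψ : ∀ X ∈ 𝓕, ∀ T ∈ Gspan 𝓕, φ (X * T) = φ X * ψ T)
    (hψφ : ∀ X ∈ 𝓕, ψ ((φ X)ᵀ * X) = Xᵀ * φ X)
    (X : Matrix (Fin n) (Fin p) ℝ) (hX : X ∈ 𝓕) (hX1 : Xᵀ * φ X = 1) :
    {Z : Matrix (Fin n) (Fin p) ℝ | Z ∈ 𝓕 ∧ Xᵀ * φ Z + Zᵀ * φ X = 0} =
    {Z : Matrix (Fin n) (Fin p) ℝ | Z ∈ 𝓕 ∧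
      ∀ T ∈ Gspan 𝓕, frobInner Z (φ X * (Tᵀ + ψ T)) = 0} := by
  have key : ∀ Z ∈ 𝓕, ∀ T ∈ Gspan 𝓕,
      frobInner Z (φ X * (Tᵀ + ψ T)) = (Tᵀ * (Zᵀ * φ X + Xᵀ * φ Z)).trace := by
    intro Z hZ T hT
    have h1 : frobInner Z (φ X * Tᵀ) = (Tᵀ * (Zᵀ * φ X)).trace := by
      unfold frobInner
      rw [← Matrix.mul_assoc, Matrix.trace_mul_cycle, Matrix.mul_assoc]
    have h2 : frobInner Z (φ X * ψ T) = (Tᵀ * (Xᵀ * φ Z)).trace := by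
      rw [← hφψ X hX T hT]
      rw [← hφsa Z (X * T)]
      unfold frobInner
      rw [← Matrix.trace_transpose ((φ Z)ᵀ * (X * T))]
      simp only [Matrix.transpose_mul, Matrix.transpose_transpose]
      rw [← Matrix.mul_assoc, Matrix.trace_mul_cycle, Matrix.mul_assoc]
    have : frobInner Z (φ X * (Tᵀ + ψ T))
        = frobInner Z (φ X * Tᵀ) + frobInner Z (φ X * ψ T) := by
      unfold frobInner
      rw [Matrix.mul_add, Matrix.mul_add, Matrix.trace_add]
    rw [this, h1, h2, Matrix.mul_add, Matrix.trace_add]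
  ext Z
  simp only [Set.mem_setOf_eq]
  constructor
  · rintro ⟨hZ, hA⟩
    refine ⟨hZ, fun T hT => ?_⟩
    rw [key Z hZ T hT]
    have : Zᵀ * φ X + Xᵀ * φ Z = 0 := by
      rw [add_comm] at hA; exact hA
    rw [this, Matrix.mul_zero, Matrix.trace_zero]
  · rintro ⟨hZ, hB⟩
    refine ⟨hZ, ?_⟩
    set S : Matrix (Fin p) (Fin p) ℝ := Xᵀ * φ Z + Zᵀ * φ X with hS
    have hSG : S ∈ Gspan 𝓕 := by
      refine Submodule.add_mem _ ?_ ?_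
      · exact Submodule.subset_span ⟨X, hX, φ Z, hφ𝓕 Z hZ, rfl⟩
      · exact Submodule.subset_span ⟨Z, hZ, φ X, hφ𝓕 X hX, rfl⟩
    have h0 := hB S hSG
    rw [key Z hZ S hSG] at h0
    have hSS : (Sᵀ * S).trace = 0 := by
      rw [← h0]; congr 1; rw [hS]
      congr 1; rw [add_comm]
    have hsum : ∑ j, ∑ k, S k j * S k j = 0 := by
      simpa [Matrix.trace, Matrix.mul_apply, Matrix.diag, Matrix.transpose_apply] using hSS
    have hzero : ∀ k j, S k j = 0 := by
      intro k j
      have h1 : ∀ j ∈ Finset.univ, (0:ℝ) ≤ ∑ k, S k j * S k j :=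
        fun j _ => Finset.sum_nonneg fun k _ => mul_self_nonneg _
      have h2 := (Finset.sum_eq_zero_iff_of_nonneg h1).mp hsum j (Finset.mem_univ j)
      have h3 : ∀ k ∈ Finset.univ, (0:ℝ) ≤ S k j * S k j :=
        fun k _ => mul_self_nonneg _
      have := (Finset.sum_eq_zero_iff_of_nonneg h3).mp h2 k (Finset.mem_univ k)
      exact mul_self_eq_zero.mp this
    ext k j
    exact hzero k j
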